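/- Let M>1 and let φ be twice continuously differentiable on (0,∞); denote by |φ''|_∞ the maximum of |φ''| on [1/M, M]. Consider a finite set C of cells, each K∈C with measure |K|>0 and a finite face set E(K) with areas |σ|>0, and time levels n=0,…,N with constant time step δt>0. Suppose for all K, σ∈E(K) and n: ρ_K^{n} ∈ [1/M, M], ρ_σ^{n} ∈ (0, M], and |u_{K,σ}^{n}| ≤ M. Define, for each K and 0≤n≤N−1, |K|·R_K^{n+1} = (φ'(ρ_K^{n+1}) − φ'(ρ_K^{n}))·Σ_{σ∈E(K)} |σ|·ρ_σ^{n}·u_{K,σ}^{n}. Then Σ_{n=0}^{N−1} δt Σ_{K∈C} |K|·|R_K^{n+1}| ≤ M²·|φ''|_∞·(Σ_{n=0}^{N−1} Σ_{K∈C} |K|·|ρ_K^{n+1}−ρ_K^{n}|)·(δt / h̲), where h̲ = min_{K∈C} |K| / (Σ_{σ∈E(K)} |σ|). -/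

import Mathlib

/-- L¹ bound (Lemma 3.2) on the remainder of the explicit time discretization of the
renormalized mass balance: `‖R‖_{L¹} ≤ M² |φ''|_∞ |ρ|_{T,BV} (δt / h̲)`, where
`h̲ = min_K |K| / Σ_{σ∈E(K)} |σ|`. -/
theorem explicit_mass_time_remainder_bound
    (M : ℝ) (hM : 1 < M)
    (φ : ℝ → ℝ) (hφ : ContDiffOn ℝ 2 φ (Set.Ioi 0))
    (C2 : ℝ) (hC2 : ∀ x ∈ Set.Icc (1 / M) M, |deriv (deriv φ) x| ≤ C2)
    (Cell Face : Type*) [Fintype Cell] [Fintype Face] [Nonempty Cell]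
    (measK : Cell → ℝ) (hmeas : ∀ Kc, 0 < measK Kc)
    (E : Cell → Finset Face) (hE : ∀ Kc, (E Kc).Nonempty)
    (area : Face → ℝ) (harea : ∀ f, 0 < area f)
    (N : ℕ) (δt : ℝ) (hδt : 0 < δt)
    (ρ : Cell → ℕ → ℝ) (hρ : ∀ Kc n, n ≤ N → ρ Kc n ∈ Set.Icc (1 / M) M)
    (ρface : Face → ℕ → ℝ) (hρface : ∀ f n, n ≤ N → ρface f n ∈ Set.Ioc 0 M)
    (uK : Cell → Face → ℕ → ℝ) (hu : ∀ Kc f n, n ≤ N → |uK Kc f n| ≤ M) :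
    ∑ n ∈ Finset.range N, δt * ∑ Kc : Cell,
        |(deriv φ (ρ Kc (n + 1)) - deriv φ (ρ Kc n)) *
          ∑ f ∈ E Kc, area f * ρface f n * uK Kc f n|
      ≤ M ^ 2 * C2 * (∑ n ∈ Finset.range N, ∑ Kc : Cell, measK Kc * |ρ Kc (n + 1) - ρ Kc n|)
          * (δt / Finset.univ.inf' Finset.univ_nonempty
              (fun Kc => measK Kc / ∑ f ∈ E Kc, area f)) := by
  have hM0 : (0 : ℝ) < M := by linarith
  have hsub : Set.Icc (1 / M) M ⊆ Set.Ioi (0 : ℝ) := fun x hx =>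
    lt_of_lt_of_le (by positivity) hx.1
  -- differentiability of deriv φ on the interval
  have h1 : ContDiffOn ℝ 1 (deriv φ) (Set.Ioi 0) :=
    hφ.deriv_of_isOpen isOpen_Ioi (by norm_num)
  have hgd : ∀ x ∈ Set.Icc (1 / M) M, DifferentiableAt ℝ (deriv φ) x := fun x hx =>
    (h1.differentiableOn one_ne_zero).differentiableAt (isOpen_Ioi.mem_nhds (hsub hx))
  have hLip : ∀ a ∈ Set.Icc (1 / M) M, ∀ b ∈ Set.Icc (1 / M) M,
      |deriv φ b - deriv φ a| ≤ C2 * |b - a| := by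
    intro a ha b hb
    have := (convex_Icc (1 / M) M).norm_image_sub_le_of_norm_deriv_le hgd
      (fun x hx => by simpa [Real.norm_eq_abs] using hC2 x hx) ha hb
    simpa [Real.norm_eq_abs] using this
  set hmin := Finset.univ.inf' Finset.univ_nonempty
      (fun Kc => measK Kc / ∑ f ∈ E Kc, area f) with hmin_def
  have hmin_pos : 0 < hmin := by
    rw [hmin_def, Finset.lt_inf'_iff]
    intro Kc _
    have h2 : 0 < ∑ f ∈ E Kc, area f := Finset.sum_pos (fun f _ => harea f) (hE Kc)
    have := hmeas Kc
    positivity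
  have hC2nn : 0 ≤ C2 := by
    have h1M : 1 / M ≤ M := by
      have : 1 / M < 1 := by rw [div_lt_one hM0]; exact hM
      linarith
    exact le_trans (abs_nonneg _) (hC2 M ⟨h1M, le_rfl⟩)
  have key : ∀ n ∈ Finset.range N, ∀ Kc : Cell,
      |(deriv φ (ρ Kc (n + 1)) - deriv φ (ρ Kc n)) *
          ∑ f ∈ E Kc, area f * ρface f n * uK Kc f n|
        ≤ M ^ 2 * C2 * (measK Kc * |ρ Kc (n + 1) - ρ Kc n|) / hmin := by
    intro n hn Kc
    have hnN : n ≤ N := le_of_lt (Finset.mem_range.mp hn)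
    have hn1N : n + 1 ≤ N := Finset.mem_range.mp hn
    have hA : 0 < ∑ f ∈ E Kc, area f := Finset.sum_pos (fun f _ => harea f) (hE Kc)
    have hAbound : (∑ f ∈ E Kc, area f) ≤ measK Kc / hmin := by
      have h3 : hmin ≤ measK Kc / ∑ f ∈ E Kc, area f :=
        Finset.inf'_le _ (Finset.mem_univ Kc)
      rw [le_div_iff₀ hmin_pos]
      calc (∑ f ∈ E Kc, area f) * hmin
          ≤ (∑ f ∈ E Kc, area f) * (measK Kc / ∑ f ∈ E Kc, area f) := by
            exact mul_le_mul_of_nonneg_left h3 hA.le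
        _ = measK Kc := by field_simp
    have hS : |∑ f ∈ E Kc, area f * ρface f n * uK Kc f n|
        ≤ M ^ 2 * ∑ f ∈ E Kc, area f := by
      calc |∑ f ∈ E Kc, area f * ρface f n * uK Kc f n|
          ≤ ∑ f ∈ E Kc, |area f * ρface f n * uK Kc f n| :=
            Finset.abs_sum_le_sum_abs _ _
        _ ≤ ∑ f ∈ E Kc, M ^ 2 * area f := by
            apply Finset.sum_le_sum
            intro f hf
            have hf1 := hρface f n hnN
            have hf2 := hu Kc f n hnN
            have := harea f
            rw [abs_mul, abs_mul, abs_of_pos this, abs_of_pos hf1.1]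
            calc area f * ρface f n * |uK Kc f n|
                ≤ area f * M * M := by
                  apply mul_le_mul (mul_le_mul_of_nonneg_left hf1.2 this.le) hf2
                    (abs_nonneg _) (by positivity)
              _ = M ^ 2 * area f := by ring
        _ = M ^ 2 * ∑ f ∈ E Kc, area f := by rw [Finset.mul_sum]
    have hΔ : |deriv φ (ρ Kc (n + 1)) - deriv φ (ρ Kc n)|
        ≤ C2 * |ρ Kc (n + 1) - ρ Kc n| :=
      hLip _ (hρ Kc n hnN) _ (hρ Kc (n + 1) hn1N)
    calc |(deriv φ (ρ Kc (n + 1)) - deriv φ (ρ Kc n)) *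
          ∑ f ∈ E Kc, area f * ρface f n * uK Kc f n|
        = |deriv φ (ρ Kc (n + 1)) - deriv φ (ρ Kc n)| *
            |∑ f ∈ E Kc, area f * ρface f n * uK Kc f n| := abs_mul _ _
      _ ≤ (C2 * |ρ Kc (n + 1) - ρ Kc n|) * (M ^ 2 * ∑ f ∈ E Kc, area f) :=
          mul_le_mul hΔ hS (abs_nonneg _) (by positivity)
      _ ≤ (C2 * |ρ Kc (n + 1) - ρ Kc n|) * (M ^ 2 * (measK Kc / hmin)) := by
          have hnn : 0 ≤ C2 * |ρ Kc (n + 1) - ρ Kc n| := by positivity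
          have : M ^ 2 * (∑ f ∈ E Kc, area f) ≤ M ^ 2 * (measK Kc / hmin) :=
            mul_le_mul_of_nonneg_left hAbound (by positivity)
          exact mul_le_mul_of_nonneg_left this hnn
      _ = M ^ 2 * C2 * (measK Kc * |ρ Kc (n + 1) - ρ Kc n|) / hmin := by ring
  calc ∑ n ∈ Finset.range N, δt * ∑ Kc : Cell,
        |(deriv φ (ρ Kc (n + 1)) - deriv φ (ρ Kc n)) *
          ∑ f ∈ E Kc, area f * ρface f n * uK Kc f n|
      ≤ ∑ n ∈ Finset.range N, δt * ∑ Kc : Cell,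
          M ^ 2 * C2 * (measK Kc * |ρ Kc (n + 1) - ρ Kc n|) / hmin := by
        apply Finset.sum_le_sum
        intro n hn
        exact mul_le_mul_of_nonneg_left
          (Finset.sum_le_sum (fun Kc _ => key n hn Kc)) hδt.le
    _ = M ^ 2 * C2 * (∑ n ∈ Finset.range N, ∑ Kc : Cell,
          measK Kc * |ρ Kc (n + 1) - ρ Kc n|) * (δt / hmin) := by
        simp only [Finset.mul_sum, Finset.sum_mul]
        apply Finset.sum_congr rfl
        intro n _
        apply Finset.sum_congr rfl
        intro Kc _
        ring
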